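/- Let 1 ≤ d ≤ 4 and let M, N ∈ S_d^+. Let (u_1,…,u_d) be an M-reduced basis of ℤ^d and let 𝒯 be an N-reduced mesh. Let z ∈ ℤ^d be a point which is not a vertex of 𝒯. Then there exists 1 ≤ l ≤ d such that z ∈ u_1ℤ + ⋯ + u_lℤ and ‖z‖_M² · e^{4·d_×(M,N)} ≥ ‖u_l‖_M² + ‖u_1‖_M². -/

import Mathlib

open Matrix
open scoped BigOperators ENNReal Classical

noncomputable section

/-- Euclidean norm of a vector of `ℝ^d`. -/
def euclNorm {d : ℕ} (u : Fin d → ℝ) : ℝ := Real.sqrt (u ⬝ᵥ u)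

/-- The norm `‖u‖_M := √(uᵀ M u)` associated to a matrix `M`. -/
def normM {d : ℕ} (M : Matrix (Fin d) (Fin d) ℝ) (u : Fin d → ℝ) : ℝ :=
  Real.sqrt (u ⬝ᵥ M.mulVec u)

/-- Operator norm of a matrix, with respect to the euclidean norm. -/
def opNorm {d : ℕ} (M : Matrix (Fin d) (Fin d) ℝ) : ℝ :=
  sSup {r : ℝ | ∃ u : Fin d → ℝ, euclNorm u = 1 ∧ r = euclNorm (M.mulVec u)}

/-- Anisotropy ratio `κ(M) := max ‖u‖_M/‖v‖_M` over euclidean-unit vectors `u, v`. -/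
def kappa {d : ℕ} (M : Matrix (Fin d) (Fin d) ℝ) : ℝ :=
  sSup {r : ℝ | ∃ u v : Fin d → ℝ,
    euclNorm u = 1 ∧ euclNorm v = 1 ∧ r = normM M u / normM M v}

/-- `z` has integer coordinates, i.e. `z ∈ ℤ^d`. -/
def IsIntVec {d : ℕ} (z : Fin d → ℝ) : Prop := ∀ i, ∃ m : ℤ, z i = (m : ℝ)

/-- `z` belongs to the sub-lattice `u_0 ℤ + ⋯ + u_{k-1} ℤ` generated by the
first `k` vectors of the family `u`. -/
def InLatticeSpan {d : ℕ} (u : Fin d → Fin d → ℝ) (k : ℕ) (z : Fin d → ℝ) : Prop :=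
  ∃ c : Fin d → ℤ, (∀ i : Fin d, ¬ ((i : ℕ) < k) → c i = 0) ∧ z = ∑ i, (c i : ℝ) • u i

/-- `u` is an `M`-reduced basis of `ℤ^d`: a basis of the lattice `ℤ^d`
(integer entries, determinant `±1`) such that each `u k` minimizes `‖·‖_M`
among integer vectors outside the sub-lattice spanned by `u 0, …, u (k-1)`. -/
def IsReducedBasis {d : ℕ} (M : Matrix (Fin d) (Fin d) ℝ) (u : Fin d → Fin d → ℝ) : Prop :=
  (∀ i, IsIntVec (u i)) ∧ |(Matrix.of u).det| = 1 ∧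
  ∀ k : Fin d, ∀ z : Fin d → ℝ, IsIntVec z → ¬ InLatticeSpan u (k : ℕ) z →
    normM M (u k) ≤ normM M z

/-- A simplex of `ℝ^d`, described by its vertex set: `d+1` affinely independent points. -/
def IsSimplex (d : ℕ) (V : Finset (Fin d → ℝ)) : Prop :=
  V.card = d + 1 ∧ AffineIndependent ℝ (fun v : V => (v : Fin d → ℝ))

/-- A (conforming) mesh: a finite collection of simplices such that the intersection
of any two of them is the convex hull of their common vertices. -/
def IsMesh (d : ℕ) (𝒯 : Finset (Finset (Fin d → ℝ))) : Prop :=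
  (∀ V ∈ 𝒯, IsSimplex d V) ∧
  ∀ S ∈ 𝒯, ∀ T ∈ 𝒯,
    (convexHull ℝ (S : Set (Fin d → ℝ))) ∩ (convexHull ℝ (T : Set (Fin d → ℝ)))
      = convexHull ℝ ((S ∩ T : Finset (Fin d → ℝ)) : Set (Fin d → ℝ))

/-- An `M`-reduced mesh. -/
def IsReducedMesh {d : ℕ} (M : Matrix (Fin d) (Fin d) ℝ)
    (𝒯 : Finset (Finset (Fin d → ℝ))) : Prop :=
  IsMesh d 𝒯 ∧
  (⋃ V ∈ 𝒯, convexHull ℝ (V : Set (Fin d → ℝ))) ∈ nhds (0 : Fin d → ℝ) ∧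
  (∀ V ∈ 𝒯, ∀ v ∈ V, IsIntVec v) ∧
  (∀ V ∈ 𝒯, MeasureTheory.volume (convexHull ℝ (V : Set (Fin d → ℝ)))
      = ENNReal.ofReal (1 / (Nat.factorial d))) ∧
  (∀ V ∈ 𝒯, (0 : Fin d → ℝ) ∈ V) ∧
  (∀ V ∈ 𝒯, ∀ v ∈ V, ∀ w ∈ V, v ≠ 0 → w ≠ 0 → 0 ≤ v ⬝ᵥ M.mulVec w)

/-- `z` is a vertex of the mesh `𝒯`. -/
def IsMeshVertex {d : ℕ} (𝒯 : Finset (Finset (Fin d → ℝ))) (z : Fin d → ℝ) : Prop :=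
  ∃ V ∈ 𝒯, z ∈ V

/-- The multiplicative distance `d_×(M,N) := sup_{u ≠ 0} |ln ‖u‖_M − ln ‖u‖_N|`. -/
def dTimes {d : ℕ} (M N : Matrix (Fin d) (Fin d) ℝ) : ℝ :=
  sSup {r : ℝ | ∃ u : Fin d → ℝ, u ≠ 0 ∧ r = |Real.log (normM M u) - Real.log (normM N u)|}

/-- The periodic unit box `Ω = (ℝ/ℤ)^d`. -/
abbrev Torus (d : ℕ) : Type := Fin d → AddCircle (1 : ℝ)

/-- Canonical projection `ℝ^d → (ℝ/ℤ)^d`. -/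
def toTorus {d : ℕ} (x : Fin d → ℝ) : Torus d := fun i => (x i : AddCircle (1 : ℝ))

/-- The grid `Ω_n = {0, 1/n, …, (n-1)/n}^d ⊂ Ω`. -/
def IsGridPoint {d : ℕ} (n : ℕ) (z : Torus d) : Prop :=
  ∃ k : Fin d → ℤ, ∀ i, z i = (((k i : ℝ) / (n : ℝ) : ℝ) : AddCircle (1 : ℝ))

/-- The quotient (periodic) distance on the torus. -/
def dPer {d : ℕ} (z x : Torus d) : ℝ :=
  sInf {r : ℝ | ∃ Z X : Fin d → ℝ, toTorus Z = z ∧ toTorus X = x ∧ r = euclNorm (Z - X)}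

/-- The Hopf–Lax update operator associated to the matrix `M`, the stencil (mesh) `𝒯`,
and the grid scale `1/n`: minimum over simplices `T ∈ 𝒯`, and over barycentric
coefficients `α ≥ 0` supported on the nonzero vertices of `T` with total mass 1, of
`‖∑ α_v v/n‖_M + ∑ α_v u(z + v/n)` (with the convention `0·∞ = 0`). -/
def hopfLax {d : ℕ} (M : Matrix (Fin d) (Fin d) ℝ) (𝒯 : Finset (Finset (Fin d → ℝ)))
    (n : ℕ) (u : Torus d → ℝ≥0∞) (z : Torus d) : ℝ≥0∞ :=
  ⨅ (T : Finset (Fin d → ℝ)) (_ : T ∈ 𝒯) (α : (Fin d → ℝ) → ℝ)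
    (_ : ∀ w, 0 ≤ α w) (_ : α 0 = 0) (_ : ∑ w ∈ T, α w = 1),
    ENNReal.ofReal (normM M ((n : ℝ)⁻¹ • ∑ w ∈ T, α w • w)) +
      ∑ w ∈ T, ENNReal.ofReal (α w) * u (z + toTorus ((n : ℝ)⁻¹ • w))

/-- `u` solves the discrete fixed point system: `u(0) = 0` and
`u(z) = Λ_n(u,z)` at every other grid point `z`. -/
def SolvesDiscrete {d : ℕ} (𝓜 : Torus d → Matrix (Fin d) (Fin d) ℝ)
    (𝒯 : Torus d → Finset (Finset (Fin d → ℝ))) (n : ℕ) (u : Torus d → ℝ≥0∞) : Prop :=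
  u 0 = 0 ∧ ∀ z : Torus d, IsGridPoint n z → z ≠ 0 → u z = hopfLax (𝓜 z) (𝒯 z) n u z


open MeasureTheory

lemma quad_pos {d : ℕ} {M : Matrix (Fin d) (Fin d) ℝ} (hM : M.PosDef) {x : Fin d → ℝ}
    (hx : x ≠ 0) : 0 < x ⬝ᵥ M.mulVec x := by simpa using hM.dotProduct_mulVec_pos hx

lemma normM_pos {d : ℕ} {M : Matrix (Fin d) (Fin d) ℝ} (hM : M.PosDef) {x : Fin d → ℝ}
    (hx : x ≠ 0) : 0 < normM M x := Real.sqrt_pos.2 (quad_pos hM hx)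

lemma normM_nonneg {d : ℕ} (M : Matrix (Fin d) (Fin d) ℝ) (x : Fin d → ℝ) :
    0 ≤ normM M x := Real.sqrt_nonneg _

lemma sq_normM {d : ℕ} {M : Matrix (Fin d) (Fin d) ℝ} (hM : M.PosDef) (x : Fin d → ℝ) :
    (normM M x) ^ 2 = x ⬝ᵥ M.mulVec x := by
  rcases eq_or_ne x 0 with rfl | hx
  · simp [normM]
  · exact Real.sq_sqrt (quad_pos hM hx).le

lemma quad_smul {d : ℕ} (M : Matrix (Fin d) (Fin d) ℝ) (c : ℝ) (x : Fin d → ℝ) :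
    (c • x) ⬝ᵥ M.mulVec (c • x) = c ^ 2 * (x ⬝ᵥ M.mulVec x) := by
  rw [Matrix.mulVec_smul, smul_dotProduct, dotProduct_smul]
  simp only [smul_eq_mul]
  ring

lemma continuous_quad {d : ℕ} (M : Matrix (Fin d) (Fin d) ℝ) :
    Continuous fun x : Fin d → ℝ => x ⬝ᵥ M.mulVec x := by
  unfold dotProduct Matrix.mulVec
  exact continuous_finset_sum _ fun i _ => (continuous_apply i).mul
    (continuous_finset_sum _ fun j _ => (continuous_const.mul (continuous_apply j)))

lemma abs_log_sub_le_dTimes {d : ℕ} {M N : Matrix (Fin d) (Fin d) ℝ}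
    (hM : M.PosDef) (hN : N.PosDef) {w : Fin d → ℝ} (hw : w ≠ 0) :
    |Real.log (normM M w) - Real.log (normM N w)| ≤ dTimes M N := by
  have hbdd : BddAbove {r : ℝ | ∃ u : Fin d → ℝ, u ≠ 0 ∧
      r = |Real.log (normM M u) - Real.log (normM N u)|} := by
    -- bound on unit sphere
    set S := Metric.sphere (0 : Fin d → ℝ) 1 with hS
    have hcomp : IsCompact S := isCompact_sphere _ _
    set F : (Fin d → ℝ) → ℝ := fun v => |Real.log (normM M v) - Real.log (normM N v)| with hF
    have hcont : ContinuousOn F S := by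
      have hne : ∀ v ∈ S, v ≠ 0 := by
        intro v hv; simp only [hS, Metric.mem_sphere, dist_zero_right] at hv
        intro h; rw [h] at hv; simp at hv
      have hlog : ∀ (P : Matrix (Fin d) (Fin d) ℝ), P.PosDef →
          ContinuousOn (fun v => Real.log (normM P v)) S := by
        intro P hP
        apply ContinuousOn.log
        · exact ((continuous_quad P).sqrt).continuousOn
        · intro v hv; exact (normM_pos hP (hne v hv)).ne'
      exact ((hlog M hM).sub (hlog N hN)).abs
    obtain ⟨C, hC⟩ := (hcomp.image_of_continuousOn hcont).bddAbove
    refine ⟨C, ?_⟩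
    rintro r ⟨u, hu, rfl⟩
    have hnu : ‖u‖ ≠ 0 := norm_ne_zero_iff.2 hu
    set v : Fin d → ℝ := ‖u‖⁻¹ • u with hv
    have hvS : v ∈ S := by
      simp only [hS, Metric.mem_sphere, dist_zero_right, hv, norm_smul, norm_inv, norm_norm]
      field_simp
    have hvne : v ≠ 0 := by
      intro h
      apply hu
      have : u = ‖u‖ • v := by rw [hv, smul_smul]; field_simp; exact (one_smul _ _).symm
      rw [this, h, smul_zero]
    have hrw : ∀ (P : Matrix (Fin d) (Fin d) ℝ), P.PosDef →
        Real.log (normM P u) = Real.log ‖u‖ + Real.log (normM P v) := by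
      intro P hP
      have hu' : u = ‖u‖ • v := by rw [hv, smul_smul]; field_simp; exact (one_smul _ _).symm
      have : normM P u = ‖u‖ * normM P v := by
        conv_lhs => rw [hu']
        rw [normM, quad_smul, Real.sqrt_mul (by positivity), Real.sqrt_sq (norm_nonneg u)]
        rfl
      rw [this, Real.log_mul hnu (normM_pos hP hvne).ne']
    have : F u = F v := by
      simp only [hF, hrw M hM, hrw N hN]; ring_nf
    rw [hF] at this
    simp only at this
    rw [this]
    exact hC ⟨v, hvS, rfl⟩
  exact le_csSup hbdd ⟨w, hw, rfl⟩

lemma normM_le_exp_dTimes {d : ℕ} {M N : Matrix (Fin d) (Fin d) ℝ}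
    (hM : M.PosDef) (hN : N.PosDef) {w : Fin d → ℝ} (hw : w ≠ 0) :
    normM M w ≤ Real.exp (dTimes M N) * normM N w := by
  have h := abs_log_sub_le_dTimes hM hN hw (M := M) (N := N)
  have h1 : Real.log (normM M w) - Real.log (normM N w) ≤ dTimes M N :=
    (abs_le.1 h).2
  have hMp := normM_pos hM hw
  have hNp := normM_pos hN hw
  have : Real.log (normM M w / normM N w) ≤ dTimes M N := by
    rw [Real.log_div hMp.ne' hNp.ne']; exact h1
  have := (Real.log_le_iff_le_exp (by positivity)).1 this
  calc normM M w = (normM M w / normM N w) * normM N w := by field_simp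
    _ ≤ Real.exp (dTimes M N) * normM N w := by
        apply mul_le_mul_of_nonneg_right this hNp.le

lemma normM_le_exp_dTimes' {d : ℕ} {M N : Matrix (Fin d) (Fin d) ℝ}
    (hM : M.PosDef) (hN : N.PosDef) {w : Fin d → ℝ} (hw : w ≠ 0) :
    normM N w ≤ Real.exp (dTimes M N) * normM M w := by
  have h := abs_log_sub_le_dTimes hM hN hw (M := M) (N := N)
  have h1 : Real.log (normM N w) - Real.log (normM M w) ≤ dTimes M N := by
    have := (abs_le.1 h).1; linarith
  have hMp := normM_pos hM hw
  have hNp := normM_pos hN hw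
  have : Real.log (normM N w / normM M w) ≤ dTimes M N := by
    rw [Real.log_div hNp.ne' hMp.ne']; exact h1
  have := (Real.log_le_iff_le_exp (by positivity)).1 this
  calc normM N w = (normM N w / normM M w) * normM M w := by field_simp
    _ ≤ Real.exp (dTimes M N) * normM M w := by
        apply mul_le_mul_of_nonneg_right this hMp.le

lemma int_rep {d : ℕ} {B : Matrix (Fin d) (Fin d) ℝ}
    (hBint : ∀ i j, ∃ m : ℤ, B i j = (m : ℝ)) (hdet : |B.det| = 1)
    {z : Fin d → ℝ} (hz : IsIntVec z) :
    ∃ c : Fin d → ℤ, z = B.mulVec (fun i => (c i : ℝ)) := by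
  choose B0 hB0 using hBint
  choose z0 hz0 using hz
  have hmap : B = (Int.castRingHom ℝ).mapMatrix (Matrix.of B0) := by
    ext i j; simp [hB0 i j]
  have hdet0 : ((Matrix.of B0).det : ℝ) = B.det := by
    rw [hmap, ← RingHom.map_det]; rfl
  have habs : |(Matrix.of B0).det| = 1 := by
    have : (|(Matrix.of B0).det| : ℝ) = 1 := by have h := hdet; rw [← hdet0] at h; exact_mod_cast h
    exact_mod_cast this
  have hunit : IsUnit (Matrix.of B0).det := by
    rcases abs_eq (by norm_num : (0:ℤ) ≤ 1) |>.1 habs with h | h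
    · exact h ▸ isUnit_one
    · rw [h]; exact IsUnit.neg isUnit_one
  set C := (Matrix.of B0)⁻¹ with hC
  refine ⟨C.mulVec z0, ?_⟩
  have key : (Matrix.of B0).mulVec (C.mulVec z0) = z0 := by
    rw [Matrix.mulVec_mulVec, Matrix.mul_nonsing_inv _ hunit, Matrix.one_mulVec]
  funext j
  rw [hz0 j]
  conv_lhs => rw [← key]
  simp only [Matrix.mulVec, dotProduct, hB0, Matrix.of_apply]
  push_cast
  rfl

lemma inLatticeSpan_mono {d : ℕ} {u : Fin d → Fin d → ℝ} {k k' : ℕ} (h : k ≤ k')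
    {z : Fin d → ℝ} (hz : InLatticeSpan u k z) : InLatticeSpan u k' z := by
  obtain ⟨c, hc0, hc⟩ := hz
  exact ⟨c, fun i hi => hc0 i (fun hlt => hi (lt_of_lt_of_le hlt h)), hc⟩

lemma inLatticeSpan_zero_iff {d : ℕ} {u : Fin d → Fin d → ℝ} {z : Fin d → ℝ} :
    InLatticeSpan u 0 z → z = 0 := by
  rintro ⟨c, hc0, rfl⟩
  have : ∀ i : Fin d, c i = 0 := fun i => hc0 i (by omega)
  simp [this]

/-- closure of the lattice span under integer combinations -/
lemma inLatticeSpan_sum {d : ℕ} {u : Fin d → Fin d → ℝ} {k : ℕ}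
    {v : Fin d → Fin d → ℝ} {c : Fin d → ℤ}
    (hv : ∀ i, c i ≠ 0 → InLatticeSpan u k (v i)) :
    InLatticeSpan u k (∑ i, (c i : ℝ) • v i) := by
  -- choose coefficient vectors for each i with c i ≠ 0
  have hv' : ∀ i, ∃ a : Fin d → ℤ, (∀ j : Fin d, ¬ ((j : ℕ) < k) → a j = 0) ∧
      (c i ≠ 0 → v i = ∑ j, (a j : ℝ) • u j) := by
    intro i
    by_cases hci : c i ≠ 0
    · obtain ⟨a, ha0, ha⟩ := hv i hci
      exact ⟨a, ha0, fun _ => ha⟩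
    · exact ⟨0, fun _ _ => rfl, fun h => absurd h hci⟩
  choose a ha0 ha using hv'
  refine ⟨fun j => ∑ i, c i * a i j, ?_, ?_⟩
  · intro j hj
    apply Finset.sum_eq_zero
    intro i _
    rw [ha0 i j hj, mul_zero]
  · have : ∀ i, (c i : ℝ) • v i = ∑ j, ((c i * a i j : ℤ) : ℝ) • u j := by
      intro i
      by_cases hci : c i = 0
      · simp [hci]
      · rw [ha i hci, Finset.smul_sum]
        congr 1; funext j
        push_cast
        rw [smul_smul]
    calc ∑ i, (c i : ℝ) • v i
        = ∑ i, ∑ j, ((c i * a i j : ℤ) : ℝ) • u j := Finset.sum_congr rfl (fun i _ => this i)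
      _ = ∑ j, ∑ i, ((c i * a i j : ℤ) : ℝ) • u j := Finset.sum_comm
      _ = ∑ j, ((∑ i, c i * a i j : ℤ) : ℝ) • u j := by
          apply Finset.sum_congr rfl
          intro j _
          rw [← Finset.sum_smul]
          norm_num


def Dset (d : ℕ) : Set (Fin d → ℝ) := {x | (∀ i, 0 ≤ x i) ∧ ∑ i, x i ≤ 1}
def cubeSet (d : ℕ) : Set (Fin d → ℝ) := Set.univ.pi fun _ => Set.Icc (0:ℝ) 1
def Lmat (d : ℕ) : Matrix (Fin d) (Fin d) ℝ := Matrix.of fun i j => if j ≤ i then 1 else 0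
def Amap (d : ℕ) (σ : Equiv.Perm (Fin d)) : (Fin d → ℝ) →ₗ[ℝ] (Fin d → ℝ) :=
  Matrix.toLin' (Equiv.Perm.permMatrix ℝ σ⁻¹ * Lmat d)
def Oset (d : ℕ) (σ : Equiv.Perm (Fin d)) : Set (Fin d → ℝ) :=
  {x | (∀ i, x i ∈ Set.Icc (0:ℝ) 1) ∧ Monotone (x ∘ σ)}

lemma permMatrix_mulVec {d : ℕ} (σ : Equiv.Perm (Fin d)) (w : Fin d → ℝ) :
    (Equiv.Perm.permMatrix ℝ σ).mulVec w = w ∘ σ := by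
  funext i
  simp only [Matrix.mulVec, dotProduct, Equiv.Perm.permMatrix, PEquiv.toMatrix_apply,
    Equiv.toPEquiv_apply, Option.mem_def, Option.some.injEq, ite_mul, one_mul, zero_mul]
  simp [Finset.sum_ite_eq]

lemma Lmat_mulVec {d : ℕ} (c : Fin d → ℝ) (i : Fin d) :
    (Lmat d).mulVec c i = ∑ j ∈ Finset.filter (· ≤ i) Finset.univ, c j := by
  simp only [Lmat, Matrix.mulVec, dotProduct, Matrix.of_apply]
  rw [Finset.sum_filter]
  apply Finset.sum_congr rfl
  intro j _
  by_cases h : j ≤ i <;> simp [h]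

lemma Lmat_det {d : ℕ} : (Lmat d).det = 1 := by
  rw [Matrix.det_of_lowerTriangular (Lmat d) (by
    intro i j h
    have h' : i < j := by simpa using h
    simp [Lmat, not_le.2 h'])]
  simp [Lmat]

lemma Amap_det_abs {d : ℕ} (σ : Equiv.Perm (Fin d)) :
    |LinearMap.det (Amap d σ)| = 1 := by
  rw [Amap, LinearMap.det_toLin', Matrix.det_mul, Matrix.det_permutation, Lmat_det, mul_one]
  rcases Int.units_eq_one_or (Equiv.Perm.sign σ⁻¹) with h | h <;> rw [h] <;> norm_num

lemma Amap_apply {d : ℕ} (σ : Equiv.Perm (Fin d)) (c : Fin d → ℝ) :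
    Amap d σ c = ((Lmat d).mulVec c) ∘ ⇑(σ⁻¹) := by
  rw [Amap, Matrix.toLin'_apply, ← Matrix.mulVec_mulVec, permMatrix_mulVec]

-- telescoping construction
def diffVec {d : ℕ} (y : Fin d → ℝ) : Fin d → ℝ :=
  fun j => if h : (j : ℕ) = 0 then y j else y j - y ⟨(j : ℕ) - 1, by omega⟩

lemma diffVec_partial_sum {d' : ℕ} (y : Fin (d'+1) → ℝ) (i : Fin (d'+1)) :
    ∑ j ∈ Finset.filter (· ≤ i) Finset.univ, diffVec y j = y i := by
  induction i using Fin.induction with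
  | zero =>
    have : Finset.filter (· ≤ (0 : Fin (d'+1))) Finset.univ = {0} := by
      ext j; simp [Fin.le_zero_iff]
    rw [this, Finset.sum_singleton]
    unfold diffVec
    simp
  | succ i ih =>
    have hins : Finset.filter (· ≤ i.succ) Finset.univ
        = insert i.succ (Finset.filter (· ≤ i.castSucc) Finset.univ) := by
      ext j
      simp only [Finset.mem_filter, Finset.mem_univ, true_and, Finset.mem_insert,
        Fin.le_def, Fin.ext_iff, Fin.val_succ, Fin.coe_castSucc]
      omega
    have hnm : i.succ ∉ Finset.filter (· ≤ i.castSucc) Finset.univ := by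
      simp only [Finset.mem_filter, Finset.mem_univ, true_and, Fin.le_def, Fin.val_succ,
        Fin.coe_castSucc]
      omega
    rw [hins, Finset.sum_insert hnm, ih]
    have h0 : ((i.succ : Fin (d'+1)) : ℕ) ≠ 0 := by simp
    rw [diffVec, dif_neg h0]
    have : (⟨((i.succ : Fin (d'+1)) : ℕ) - 1, by omega⟩ : Fin (d'+1)) = i.castSucc := by
      ext; simp
    rw [this]; ring

lemma diffVec_total_sum {d' : ℕ} (y : Fin (d'+1) → ℝ) :
    ∑ j, diffVec y j = y (Fin.last d') := by
  rw [← diffVec_partial_sum y (Fin.last d')]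
  congr 1
  ext j; simp [Fin.le_last]

-- covering
lemma cube_subset_iUnion {d' : ℕ} :
    cubeSet (d'+1) ⊆ ⋃ σ : Equiv.Perm (Fin (d'+1)), (Amap (d'+1) σ) '' Dset (d'+1) := by
  intro x hx
  simp only [cubeSet, Set.mem_pi, Set.mem_univ, forall_true_left, Set.mem_Icc] at hx
  set σ := Tuple.sort x with hσ
  have hmono : Monotone (x ∘ σ) := Tuple.monotone_sort x
  set y := x ∘ σ with hy
  set c := diffVec y with hc
  have hcD : c ∈ Dset (d'+1) := by
    constructor
    · intro j
      rw [hc]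
      unfold diffVec
      split_ifs with h
      · exact (hx _).1
      · have hle : (⟨(j : ℕ) - 1, by omega⟩ : Fin (d'+1)) ≤ j := by
          rw [Fin.le_def]; simp
        have := hmono hle
        simp only [hy, Function.comp_apply] at this ⊢
        linarith
    · rw [hc, diffVec_total_sum]
      exact (hx _).2
  refine Set.mem_iUnion.2 ⟨σ, c, hcD, ?_⟩
  rw [Amap_apply]
  funext k
  have : (Lmat (d'+1)).mulVec c = y := by
    funext i; rw [Lmat_mulVec, hc, diffVec_partial_sum]
  rw [this]
  simp [hy, Equiv.Perm.inv_def]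

-- image inside O set
lemma image_subset_Oset {d : ℕ} (σ : Equiv.Perm (Fin d)) :
    (Amap d σ) '' Dset d ⊆ Oset d σ := by
  rintro x ⟨c, ⟨hc0, hc1⟩, rfl⟩
  rw [Amap_apply]
  have hb : ∀ i : Fin d, (Lmat d).mulVec c i ∈ Set.Icc (0:ℝ) 1 := by
    intro i
    rw [Lmat_mulVec]
    constructor
    · exact Finset.sum_nonneg fun j _ => hc0 j
    · calc ∑ j ∈ Finset.filter (· ≤ i) Finset.univ, c j
          ≤ ∑ j, c j := Finset.sum_le_sum_of_subset_of_nonneg (Finset.filter_subset _ _)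
            (fun j _ _ => hc0 j)
        _ ≤ 1 := hc1
  constructor
  · intro i; exact hb _
  · intro i i' hii'
    simp only [Function.comp_apply, Equiv.Perm.inv_def, Equiv.symm_apply_apply]
    rw [Lmat_mulVec, Lmat_mulVec]
    apply Finset.sum_le_sum_of_subset_of_nonneg
    · intro j hj
      simp only [Finset.mem_filter, Finset.mem_univ, true_and] at hj ⊢
      exact le_trans hj hii'
    · intro j _ _; exact hc0 j

-- null set of equal coordinates
lemma null_eq_coords {d : ℕ} {i j : Fin d} (hij : i ≠ j) :
    volume {x : Fin d → ℝ | x i = x j} = 0 := by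
  set ℓ : (Fin d → ℝ) →ₗ[ℝ] ℝ :=
    (LinearMap.proj i : (Fin d → ℝ) →ₗ[ℝ] ℝ) - (LinearMap.proj j : (Fin d → ℝ) →ₗ[ℝ] ℝ) with hℓ
  have hset : {x : Fin d → ℝ | x i = x j} = (LinearMap.ker ℓ : Set (Fin d → ℝ)) := by
    ext x
    simp only [Set.mem_setOf_eq, SetLike.mem_coe, LinearMap.mem_ker, hℓ, LinearMap.sub_apply,
      LinearMap.proj_apply, sub_eq_zero]
  rw [hset]
  apply Measure.addHaar_submodule
  intro htop
  have h1 : (Pi.single i 1 : Fin d → ℝ) ∈ LinearMap.ker ℓ := htop ▸ Submodule.mem_top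
  simp only [LinearMap.mem_ker, hℓ, LinearMap.sub_apply, LinearMap.proj_apply] at h1
  rw [Pi.single_eq_same, Pi.single_eq_of_ne (Ne.symm hij)] at h1
  norm_num at h1

lemma Oset_inter_subset {d : ℕ} {σ τ : Equiv.Perm (Fin d)} (hστ : σ ≠ τ) :
    Oset d σ ∩ Oset d τ ⊆ ⋃ (p : Fin d × Fin d) (_ : p.1 ≠ p.2), {x | x p.1 = x p.2} := by
  rintro x ⟨⟨_, hσm⟩, ⟨_, hτm⟩⟩
  by_cases hinj : Function.Injective x
  · exfalso
    apply hστ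
    have hsm : StrictMono (x ∘ σ) := hσm.strictMono_of_injective (hinj.comp σ.injective)
    have htm : StrictMono (x ∘ τ) := hτm.strictMono_of_injective (hinj.comp τ.injective)
    have hr : Set.range (x ∘ σ) = Set.range (x ∘ τ) := by
      rw [Set.range_comp, Set.range_comp, σ.surjective.range_eq, τ.surjective.range_eq]
    haveI : WellFoundedLT (Fin d) := Finite.to_wellFoundedLT
    have heq := (StrictMono.range_inj (β := Fin d) hsm htm).1 hr
    exact Equiv.ext fun k => hinj (congrFun heq k)
  · simp only [Function.Injective, not_forall] at hinj
    obtain ⟨a, b, hab, hne⟩ := hinj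
    exact Set.mem_iUnion.2 ⟨(a, b), Set.mem_iUnion.2 ⟨hne, hab⟩⟩

lemma volume_Dset {d : ℕ} (hd : 0 < d) :
    volume (Dset d) = ((Nat.factorial d : ℝ≥0∞))⁻¹ := by
  obtain ⟨d', rfl⟩ : ∃ d', d = d'+1 := ⟨d - 1, by omega⟩
  have hDsub : Dset (d'+1) ⊆ cubeSet (d'+1) := by
    rintro x ⟨h0, h1⟩ i _
    refine ⟨h0 i, ?_⟩
    calc x i ≤ ∑ j, x j := Finset.single_le_sum (fun j _ => h0 j) (Finset.mem_univ i)
      _ ≤ 1 := h1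
  have hcube_comp : IsCompact (cubeSet (d'+1)) := isCompact_univ_pi fun _ => isCompact_Icc
  have hDclosed : IsClosed (Dset (d'+1)) := by
    have heq : Dset (d'+1)
        = (⋂ i, {x : Fin (d'+1) → ℝ | 0 ≤ x i}) ∩ {x | ∑ i, x i ≤ 1} := by
      ext x; simp [Dset, Set.mem_iInter]
    rw [heq]
    exact (isClosed_iInter fun i => isClosed_le continuous_const (continuous_apply i)).inter
      (isClosed_le (continuous_finset_sum _ fun i _ => continuous_apply i) continuous_const)
  have hDcomp : IsCompact (Dset (d'+1)) := hcube_comp.of_isClosed_subset hDclosed hDsub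
  set f : Equiv.Perm (Fin (d'+1)) → Set (Fin (d'+1) → ℝ) :=
    fun σ => (Amap (d'+1) σ) '' Dset (d'+1) with hf
  have hfcomp : ∀ σ, IsCompact (f σ) := fun σ =>
    hDcomp.image (Amap (d'+1) σ).continuous_of_finiteDimensional
  have hfmeas : ∀ σ, NullMeasurableSet (f σ) volume := fun σ =>
    ((hfcomp σ).isClosed.measurableSet).nullMeasurableSet
  have hnull : volume (⋃ (p : Fin (d'+1) × Fin (d'+1)) (_ : p.1 ≠ p.2),
      {x : Fin (d'+1) → ℝ | x p.1 = x p.2}) = 0 := by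
    apply measure_iUnion_null
    intro p
    by_cases h : p.1 = p.2
    · simp [h]
    · apply measure_iUnion_null
      intro _
      exact null_eq_coords h
  have hdisj : Pairwise (Function.onFun (MeasureTheory.AEDisjoint volume) f) := by
    intro σ τ hστ
    apply measure_mono_null ?_ hnull
    exact subset_trans (Set.inter_subset_inter (image_subset_Oset σ) (image_subset_Oset τ))
      (Oset_inter_subset hστ)
  have hunion_eq : volume (⋃ σ, f σ) = ∑' σ, volume (f σ) := measure_iUnion₀ hdisj hfmeas
  have hval : ∀ σ, volume (f σ) = volume (Dset (d'+1)) := by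
    intro σ
    rw [hf]
    rw [Measure.addHaar_image_linearMap volume (Amap (d'+1) σ) (Dset (d'+1)),
      Amap_det_abs σ]
    simp
  have hcubevol : volume (cubeSet (d'+1)) = 1 := by
    rw [cubeSet, volume_pi_pi]
    simp [Real.volume_Icc]
  have hle : volume (⋃ σ, f σ) ≤ 1 := by
    rw [← hcubevol]
    apply measure_mono
    apply Set.iUnion_subset
    intro σ
    refine subset_trans (image_subset_Oset σ) ?_
    intro x hx i _
    exact hx.1 i
  have hge : (1:ℝ≥0∞) ≤ volume (⋃ σ, f σ) := hcubevol ▸ measure_mono cube_subset_iUnion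
  have huni : volume (⋃ σ, f σ) = 1 := le_antisymm hle hge
  have hsum : (((d'+1).factorial : ℕ) : ℝ≥0∞) * volume (Dset (d'+1)) = 1 := by
    rw [← huni, hunion_eq, tsum_fintype]
    rw [Finset.sum_congr rfl (fun σ _ => hval σ), Finset.sum_const]
    rw [Finset.card_univ, Fintype.card_perm, Fintype.card_fin, nsmul_eq_mul]
  have hne : (((d'+1).factorial : ℕ) : ℝ≥0∞) ≠ 0 :=
    Nat.cast_ne_zero.2 (Nat.factorial_ne_zero _)
  have hnetop : (((d'+1).factorial : ℕ) : ℝ≥0∞) ≠ ⊤ := ENNReal.natCast_ne_top _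
  calc volume (Dset (d'+1))
      = (((d'+1).factorial : ℕ) : ℝ≥0∞)⁻¹ * ((((d'+1).factorial : ℕ) : ℝ≥0∞) * volume (Dset (d'+1))) := by
        rw [← mul_assoc, ENNReal.inv_mul_cancel hne hnetop, one_mul]
    _ = (((d'+1).factorial : ℕ) : ℝ≥0∞)⁻¹ := by rw [hsum, mul_one]

lemma convex_Dset {d : ℕ} : Convex ℝ (Dset d) := by
  intro x hx y hy a b ha hb hab
  constructor
  · intro i
    have h1 := hx.1 i; have h2 := hy.1 i
    simp only [Pi.add_apply, Pi.smul_apply, smul_eq_mul]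
    nlinarith
  · simp only [Pi.add_apply, Pi.smul_apply, smul_eq_mul]
    rw [Finset.sum_add_distrib, ← Finset.mul_sum, ← Finset.mul_sum]
    nlinarith [hx.2, hy.2, hx.1, hy.1, Finset.sum_nonneg (fun i (_ : i ∈ Finset.univ) => hx.1 i),
      Finset.sum_nonneg (fun i (_ : i ∈ Finset.univ) => hy.1 i)]

lemma convexHull_simplex_eq {d : ℕ} (v : Fin d → Fin d → ℝ) :
    convexHull ℝ (insert (0 : Fin d → ℝ) (Set.range v))
      = (Matrix.toLin' (Matrix.of fun i j => v j i)) '' Dset d := by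
  set B : Matrix (Fin d) (Fin d) ℝ := Matrix.of fun i j => v j i with hB
  have hBapply : ∀ c : Fin d → ℝ, Matrix.toLin' B c = ∑ j, c j • v j := by
    intro c
    funext i
    rw [Matrix.toLin'_apply]
    simp only [Matrix.mulVec, dotProduct, hB, Matrix.of_apply, Finset.sum_apply,
      Pi.smul_apply, smul_eq_mul]
    exact Finset.sum_congr rfl fun j _ => mul_comm _ _
  apply le_antisymm
  · apply convexHull_min
    · intro x hx
      rcases Set.mem_insert_iff.1 hx with rfl | ⟨k, rfl⟩
      · exact ⟨0, ⟨fun i => le_refl 0, by simp⟩, map_zero _⟩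
      · refine ⟨Pi.single k 1, ⟨?_, ?_⟩, ?_⟩
        · intro i
          by_cases h : i = k
          · subst h; simp
          · simp [Pi.single_eq_of_ne h]
        · simp [Finset.sum_pi_single]
        · rw [hBapply]
          rw [Finset.sum_eq_single k]
          · simp
          · intro j _ hj
            rw [Pi.single_eq_of_ne hj, zero_smul]
          · intro h; exact absurd (Finset.mem_univ k) h
    · exact convex_Dset.is_linear_image (Matrix.toLin' B).isLinear
  · rintro x ⟨c, ⟨hc0, hc1⟩, rfl⟩
    rw [hBapply]
    have hmem : ∀ o : Option (Fin d), (Option.elim o (0 : Fin d → ℝ) v) ∈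
        convexHull ℝ (insert (0 : Fin d → ℝ) (Set.range v)) := by
      intro o
      apply subset_convexHull
      cases o with
      | none => exact Set.mem_insert _ _
      | some j => exact Set.mem_insert_iff.2 (Or.inr ⟨j, rfl⟩)
    have hw0 : ∀ o : Option (Fin d), 0 ≤ (Option.elim o (1 - ∑ j, c j) c) := by
      rintro (_|j)
      · simpa using sub_nonneg.2 hc1
      · exact hc0 j
    have hw1 : ∑ o : Option (Fin d), (Option.elim o (1 - ∑ j, c j) c) = 1 := by
      rw [Fintype.sum_option]; simp
    have hmain := (convex_convexHull ℝ (insert (0 : Fin d → ℝ) (Set.range v))).sum_mem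
      (t := (Finset.univ : Finset (Option (Fin d))))
      (fun o _ => hw0 o) hw1 (fun o _ => hmem o)
    have hsum : ∑ o : Option (Fin d),
        (Option.elim o (1 - ∑ j, c j) c) • (Option.elim o (0 : Fin d → ℝ) v)
        = ∑ j, c j • v j := by
      rw [Fintype.sum_option]; simp
    rw [← hsum]
    exact hmain

lemma det_abs_one_of_volume {d : ℕ} (hd : 0 < d) (v : Fin d → Fin d → ℝ)
    (hvol : MeasureTheory.volume (convexHull ℝ (insert (0 : Fin d → ℝ) (Set.range v)))
      = ENNReal.ofReal (1 / (Nat.factorial d))) :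
    |(Matrix.of fun i j => v j i).det| = 1 := by
  rw [convexHull_simplex_eq] at hvol
  rw [Measure.addHaar_image_linearMap volume _ (Dset d), LinearMap.det_toLin',
    volume_Dset hd] at hvol
  have h2 : ENNReal.ofReal (1 / (Nat.factorial d : ℝ)) = ((Nat.factorial d : ℕ) : ℝ≥0∞)⁻¹ := by
    rw [one_div, ENNReal.ofReal_inv_of_pos (by positivity), ENNReal.ofReal_natCast]
  rw [h2] at hvol
  have hne : ((Nat.factorial d : ℕ) : ℝ≥0∞) ≠ 0 := Nat.cast_ne_zero.2 (Nat.factorial_ne_zero _)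
  have hnetop : ((Nat.factorial d : ℕ) : ℝ≥0∞) ≠ ⊤ := ENNReal.natCast_ne_top _
  have hofreal : ENNReal.ofReal |(Matrix.of fun i j => v j i).det| = 1 := by
    have := congrArg (· * ((Nat.factorial d : ℕ) : ℝ≥0∞)) hvol
    simp only [mul_assoc, ENNReal.inv_mul_cancel hne hnetop, mul_one] at this
    exact this
  have habs : (0:ℝ) ≤ |(Matrix.of fun i j => v j i).det| := abs_nonneg _
  rw [← ENNReal.ofReal_one] at hofreal
  exact (ENNReal.ofReal_eq_ofReal_iff habs (by norm_num)).1 hofreal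

lemma dotProduct_mulVec_expand {d : ℕ} (N : Matrix (Fin d) (Fin d) ℝ) (c : Fin d → ℝ)
    (v : Fin d → Fin d → ℝ) :
    (∑ i, c i • v i) ⬝ᵥ N.mulVec (∑ i, c i • v i)
      = ∑ i, ∑ k, (c i * c k) * (v i ⬝ᵥ N.mulVec (v k)) := by
  have hmv : N.mulVec (∑ i, c i • v i) = ∑ k, c k • N.mulVec (v k) := by
    funext a
    simp only [Matrix.mulVec, dotProduct, Finset.sum_apply, Pi.smul_apply, smul_eq_mul,
      Finset.mul_sum]
    rw [Finset.sum_comm]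
    apply Finset.sum_congr rfl
    intro i _
    apply Finset.sum_congr rfl
    intro b _
    ring
  rw [hmv]
  have h1 : ∀ a, (∑ i, c i • v i) a = ∑ i, c i * v i a := by
    intro a; simp [Finset.sum_apply]
  have h2 : ∀ a, (∑ k, c k • N.mulVec (v k)) a = ∑ k, c k * (N.mulVec (v k)) a := by
    intro a; simp [Finset.sum_apply]
  calc (∑ i, c i • v i) ⬝ᵥ (∑ k, c k • N.mulVec (v k))
      = ∑ a, (∑ i, c i * v i a) * (∑ k, c k * (N.mulVec (v k)) a) := by
        simp only [dotProduct]
        apply Finset.sum_congr rfl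
        intro a _
        rw [h1, h2]
    _ = ∑ a, ∑ i, ∑ k, (c i * v i a) * (c k * (N.mulVec (v k)) a) := by
        apply Finset.sum_congr rfl
        intro a _
        rw [Finset.sum_mul_sum]
    _ = ∑ i, ∑ a, ∑ k, (c i * v i a) * (c k * (N.mulVec (v k)) a) := Finset.sum_comm
    _ = ∑ i, ∑ k, ∑ a, (c i * v i a) * (c k * (N.mulVec (v k)) a) :=
        Finset.sum_congr rfl fun i _ => Finset.sum_comm
    _ = ∑ i, ∑ k, (c i * c k) * (v i ⬝ᵥ N.mulVec (v k)) := by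
        apply Finset.sum_congr rfl
        intro i _
        apply Finset.sum_congr rfl
        intro k _
        simp only [dotProduct, Finset.mul_sum]
        apply Finset.sum_congr rfl
        intro a _
        ring

lemma mulVec_cols {d : ℕ} (v : Fin d → Fin d → ℝ) (a : Fin d → ℝ) :
    (Matrix.of fun i j => v j i).mulVec a = ∑ i, a i • v i := by
  funext j
  simp only [Matrix.mulVec, dotProduct, Matrix.of_apply, Finset.sum_apply,
    Pi.smul_apply, smul_eq_mul]
  exact Finset.sum_congr rfl fun i _ => mul_comm _ _

/-- Lemma of §1.1: a lower bound on the `M`-norm of integer points which are not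
vertices of an `N`-reduced mesh. -/
theorem stmt4 {d : ℕ} (hd1 : 1 ≤ d) (hd4 : d ≤ 4)
    (M N : Matrix (Fin d) (Fin d) ℝ) (hM : M.PosDef) (hN : N.PosDef)
    (u : Fin d → Fin d → ℝ) (hu : IsReducedBasis M u)
    (𝒯 : Finset (Finset (Fin d → ℝ))) (h𝒯 : IsReducedMesh N 𝒯)
    (z : Fin d → ℝ) (hzint : IsIntVec z) (hz : ¬ IsMeshVertex 𝒯 z) :
    ∃ l : Fin d, InLatticeSpan u ((l : ℕ) + 1) z ∧
      (normM M z) ^ 2 * Real.exp (4 * dTimes M N)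
        ≥ (normM M (u l)) ^ 2 + (normM M (u ⟨0, hd1⟩)) ^ 2 := by
  classical
  obtain ⟨hmesh, hnhds, hint, hvol, h0mem, hacute⟩ := h𝒯
  obtain ⟨hu_int, hu_det, hu_min⟩ := hu
  -- 0 is a mesh vertex, so z ≠ 0
  have hTne : ∃ V, V ∈ 𝒯 := by
    have h0 : (0 : Fin d → ℝ) ∈ ⋃ V ∈ 𝒯, convexHull ℝ (V : Set (Fin d → ℝ)) :=
      mem_of_mem_nhds hnhds
    simp only [Set.mem_iUnion] at h0
    obtain ⟨V, hV, _⟩ := h0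
    exact ⟨V, hV⟩
  have hz0 : z ≠ 0 := by
    rintro rfl
    obtain ⟨V, hV⟩ := hTne
    exact hz ⟨V, hV, h0mem V hV⟩
  -- a small positive multiple of z lies in the mesh
  obtain ⟨ε, hεpos, hball⟩ := Metric.mem_nhds_iff.1 hnhds
  have hznorm : 0 < ‖z‖ := norm_pos_iff.2 hz0
  set t : ℝ := ε / (2 * ‖z‖) with ht
  have htpos : 0 < t := by positivity
  have htz : t • z ∈ ⋃ V ∈ 𝒯, convexHull ℝ (V : Set (Fin d → ℝ)) := by
    apply hball
    simp only [Metric.mem_ball, dist_zero_right, norm_smul, Real.norm_eq_abs,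
      abs_of_pos htpos]
    rw [ht, div_mul_eq_mul_div]
    rw [div_lt_iff₀ (by positivity)]
    nlinarith
  simp only [Set.mem_iUnion] at htz
  obtain ⟨V, hV𝒯, hmemV⟩ := htz
  -- structure of the simplex V
  have hVcard : V.card = d + 1 := (hmesh.1 V hV𝒯).1
  have h0V : (0 : Fin d → ℝ) ∈ V := h0mem V hV𝒯
  set W := V.erase (0 : Fin d → ℝ) with hW
  have hWcard : W.card = d := by
    rw [hW, Finset.card_erase_of_mem h0V, hVcard]
    omega
  set e : Fin d ≃ {x // x ∈ W} := (finCongr hWcard.symm).trans W.equivFin.symm with he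
  set v : Fin d → (Fin d → ℝ) := fun i => ((e i : {x // x ∈ W}) : Fin d → ℝ) with hv
  have hvW : ∀ i, v i ∈ W := fun i => (e i).2
  have hvV : ∀ i, v i ∈ V := fun i => Finset.mem_of_mem_erase (hvW i)
  have hvne0 : ∀ i, v i ≠ 0 := fun i => Finset.ne_of_mem_erase (hvW i)
  have hrange : (W : Set (Fin d → ℝ)) = Set.range v := by
    ext x
    constructor
    · intro hx
      exact ⟨e.symm ⟨x, hx⟩, by simp [hv]⟩
    · rintro ⟨i, rfl⟩
      exact hvW i
  have hVset : (V : Set (Fin d → ℝ)) = insert 0 (Set.range v) := by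
    rw [← hrange]
    conv_lhs => rw [show V = insert 0 W from (Finset.insert_erase h0V).symm]
    rw [Finset.coe_insert]
  -- the matrix of the nonzero vertices is unimodular
  set B : Matrix (Fin d) (Fin d) ℝ := Matrix.of fun i j => v j i with hB
  have hdetB : |B.det| = 1 := by
    apply det_abs_one_of_volume hd1 v
    rw [← hVset]
    exact hvol V hV𝒯
  have hBdetne : B.det ≠ 0 := by
    intro h
    rw [h] at hdetB
    simp at hdetB
  have hBint : ∀ i j, ∃ m : ℤ, B i j = (m : ℝ) := fun i j => hint V hV𝒯 (v j) (hvV j) i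
  -- integer coordinates of z in the basis of the simplex
  obtain ⟨c, hc⟩ := int_rep hBint hdetB hzint
  have hzsum : z = ∑ i, (c i : ℝ) • v i := by
    rw [hc, hB, mulVec_cols]
  -- real barycentric coordinates, and their nonnegativity
  rw [Finset.convexHull_eq] at hmemV
  obtain ⟨w, hw0, hw1, hwc⟩ := hmemV
  rw [Finset.centerMass_eq_of_sum_1 _ _ hw1] at hwc
  have hwc' : ∑ y ∈ W, w y • y = t • z := by
    rw [show V = insert 0 W from (Finset.insert_erase h0V).symm,
      Finset.sum_insert (Finset.notMem_erase _ _)] at hwc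
    simpa using hwc
  have hsumW : ∑ y ∈ W, w y • y = ∑ i, w (v i) • v i := by
    rw [← Finset.sum_attach W (fun y => w y • y), ← Finset.univ_eq_attach]
    exact (Equiv.sum_comp e (fun x : {x // x ∈ W} => w (x : Fin d → ℝ) • (x : Fin d → ℝ))).symm
  have hzrep2 : z = ∑ i, (t⁻¹ * w (v i)) • v i := by
    have h1 : z = t⁻¹ • (t • z) := by
      rw [smul_smul, inv_mul_cancel₀ htpos.ne', one_smul]
    rw [h1, ← hwc', hsumW, Finset.smul_sum]
    exact Finset.sum_congr rfl fun i _ => by rw [smul_smul]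
  have hceq : ∀ i, (c i : ℝ) = t⁻¹ * w (v i) := by
    have h1 : B.mulVec (fun i => (c i : ℝ)) = B.mulVec (fun i => t⁻¹ * w (v i)) := by
      rw [hB, mulVec_cols, mulVec_cols, ← hzsum, ← hzrep2]
    have h2 := congrArg (fun y => B⁻¹.mulVec y) h1
    simp only [Matrix.mulVec_mulVec, Matrix.nonsing_inv_mul B (isUnit_iff_ne_zero.2 hBdetne),
      Matrix.one_mulVec] at h2
    intro i
    exact congrFun h2 i
  have hc_nonneg : ∀ i, 0 ≤ c i := by
    intro i
    have h1 : (0 : ℝ) ≤ (c i : ℝ) := by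
      rw [hceq i]
      exact mul_nonneg (inv_nonneg.2 htpos.le) (hw0 (v i) (hvV i))
    exact_mod_cast h1
  have hzne_v : ∀ i, z ≠ v i := fun i h => hz ⟨V, hV𝒯, h ▸ hvV i⟩
  -- full lattice span
  have hfull : InLatticeSpan u d z := by
    have hdetu : |(Matrix.of fun i j => u j i).det| = 1 := by
      have : (Matrix.of fun i j => u j i) = (Matrix.of u)ᵀ := by
        ext i j
        rfl
      rw [this, Matrix.det_transpose]
      exact hu_det
    obtain ⟨c', hc'⟩ := int_rep (fun i j => hu_int j i) hdetu hzint
    refine ⟨c', fun i hi => absurd i.isLt hi, ?_⟩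
    rw [hc']
    exact mulVec_cols u (fun i => (c' i : ℝ))
  set P : ℕ → Prop := fun k => InLatticeSpan u k z with hP
  have hex : ∃ k, P k := ⟨d, hfull⟩
  set m := Nat.find hex with hmdef
  have hm : P m := Nat.find_spec hex
  have hmle : m ≤ d := Nat.find_le hfull
  have hm0 : m ≠ 0 := by
    intro h
    exact hz0 (inLatticeSpan_zero_iff (h ▸ hm))
  have hmlt : ¬ P (m - 1) := Nat.find_min hex (by omega)
  set l : Fin d := ⟨m - 1, by omega⟩ with hl
  -- a vertex with nonzero coefficient outside the smaller lattice
  have hj0 : ∃ j, c j ≠ 0 ∧ ¬ InLatticeSpan u (m - 1) (v j) := by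
    by_contra h
    push_neg at h
    apply hmlt
    show InLatticeSpan u (m - 1) z
    rw [hzsum]
    exact inLatticeSpan_sum fun i hi => h i hi
  obtain ⟨j0, hj0ne, hj0lat⟩ := hj0
  have hq : ∀ i k, (0 : ℝ) ≤ v i ⬝ᵥ N.mulVec (v k) := fun i k =>
    hacute V hV𝒯 (v i) (hvV i) (v k) (hvV k) (hvne0 i) (hvne0 k)
  -- quadratic form expansion
  set T : Fin d → Fin d → ℝ := fun i k => ((c i : ℝ) * (c k : ℝ)) * (v i ⬝ᵥ N.mulVec (v k))
    with hT
  have hterm_nonneg : ∀ i k, 0 ≤ T i k := fun i k =>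
    mul_nonneg (mul_nonneg (by exact_mod_cast hc_nonneg i) (by exact_mod_cast hc_nonneg k))
      (hq i k)
  have hexpand : z ⬝ᵥ N.mulVec z = ∑ i, ∑ k, T i k := by
    conv_lhs => rw [hzsum]
    rw [dotProduct_mulVec_expand N (fun i => (c i : ℝ)) v]
  have hdiag : ∀ s : Finset (Fin d), ∑ i ∈ s, T i i ≤ z ⬝ᵥ N.mulVec z := by
    intro s
    rw [hexpand]
    calc ∑ i ∈ s, T i i ≤ ∑ i, T i i :=
          Finset.sum_le_sum_of_subset_of_nonneg (Finset.subset_univ s)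
            (fun i _ _ => hterm_nonneg i i)
      _ ≤ ∑ i, ∑ k, T i k := Finset.sum_le_sum fun i _ =>
          Finset.single_le_sum (fun k _ => hterm_nonneg i k) (Finset.mem_univ i)
  have hcj0_one : (1 : ℝ) ≤ (c j0 : ℝ) := by
    have : 1 ≤ c j0 := by
      have := hc_nonneg j0
      omega
    exact_mod_cast this
  -- key inequality: ∃ j1, q j0 + q j1 ≤ z N z
  have hkey : ∃ j1, (v j0 ⬝ᵥ N.mulVec (v j0)) + (v j1 ⬝ᵥ N.mulVec (v j1))
      ≤ z ⬝ᵥ N.mulVec z := by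
    by_cases hcj0 : 2 ≤ c j0
    · refine ⟨j0, ?_⟩
      have h2 : (2 : ℝ) ≤ (c j0 : ℝ) := by exact_mod_cast hcj0
      have h3 : ((c j0 : ℝ) * (c j0 : ℝ)) * (v j0 ⬝ᵥ N.mulVec (v j0)) ≤ z ⬝ᵥ N.mulVec z := by
        have := hdiag {j0}
        rwa [Finset.sum_singleton] at this
      have h4 := hq j0 j0
      have h6 : (4 : ℝ) ≤ (c j0 : ℝ) * (c j0 : ℝ) := by nlinarith
      have h7 : (0:ℝ) ≤ ((c j0 : ℝ) * (c j0 : ℝ) - 4) * (v j0 ⬝ᵥ N.mulVec (v j0)) :=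
        mul_nonneg (by linarith) h4
      nlinarith
    · -- c j0 = 1, find a second index
      have hcj0_eq : c j0 = 1 := by
        have := hc_nonneg j0
        omega
      have hj1 : ∃ j1, j1 ≠ j0 ∧ c j1 ≠ 0 := by
        by_contra h
        push_neg at h
        apply hzne_v j0
        rw [hzsum, Finset.sum_eq_single j0]
        · rw [hcj0_eq]
          simp
        · intro i _ hi
          rw [h i hi]
          simp
        · intro h'
          exact absurd (Finset.mem_univ j0) h'
      obtain ⟨j1, hj1ne, hj1c⟩ := hj1
      refine ⟨j1, ?_⟩
      have hcj1_one : (1 : ℝ) ≤ (c j1 : ℝ) := by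
        have : 1 ≤ c j1 := by
          have := hc_nonneg j1
          omega
        exact_mod_cast this
      have h3 : ((c j0 : ℝ) * (c j0 : ℝ)) * (v j0 ⬝ᵥ N.mulVec (v j0))
          + ((c j1 : ℝ) * (c j1 : ℝ)) * (v j1 ⬝ᵥ N.mulVec (v j1)) ≤ z ⬝ᵥ N.mulVec z := by
        have := hdiag {j0, j1}
        rwa [Finset.sum_pair (Ne.symm hj1ne)] at this
      have h4 := hq j0 j0
      have h5 := hq j1 j1
      have hc1 : (c j0 : ℝ) = 1 := by exact_mod_cast hcj0_eq
      rw [hc1, one_mul, one_mul] at h3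
      have h7 : (0:ℝ) ≤ ((c j1 : ℝ) - 1) * ((c j1 : ℝ) + 1) * (v j1 ⬝ᵥ N.mulVec (v j1)) :=
        mul_nonneg (mul_nonneg (by linarith) (by linarith)) h5
      nlinarith [h3, h7]
  obtain ⟨j1, hkey⟩ := hkey
  -- norms comparison
  refine ⟨l, ?_, ?_⟩
  · show InLatticeSpan u ((l : ℕ) + 1) z
    have : (l : ℕ) + 1 = m := by
      simp only [hl]
      omega
    rw [this]
    exact hm
  · set D := dTimes M N with hD
    set E := Real.exp D with hE
    have hEpos : 0 < E := Real.exp_pos _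
    have h_l_le : normM M (u l) ≤ normM M (v j0) := by
      apply hu_min l (v j0) (fun i => hint V hV𝒯 (v j0) (hvV j0) i)
      show ¬ InLatticeSpan u ((l : ℕ)) (v j0)
      exact hj0lat
    have h_0_le : normM M (u ⟨0, hd1⟩) ≤ normM M (v j1) := by
      apply hu_min ⟨0, hd1⟩ (v j1) (fun i => hint V hV𝒯 (v j1) (hvV j1) i)
      intro hlat
      exact hvne0 j1 (inLatticeSpan_zero_iff hlat)
    have hMN_j0 : normM M (v j0) ≤ E * normM N (v j0) := normM_le_exp_dTimes hM hN (hvne0 j0)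
    have hMN_j1 : normM M (v j1) ≤ E * normM N (v j1) := normM_le_exp_dTimes hM hN (hvne0 j1)
    have hNM_z : normM N z ≤ E * normM M z := normM_le_exp_dTimes' hM hN hz0
    have hE4 : Real.exp (4 * D) = E ^ 4 := by
      rw [hE, show (4 : ℝ) * D = D + D + D + D by ring, Real.exp_add, Real.exp_add,
        Real.exp_add]
      ring
    rw [ge_iff_le, hE4]
    have hA : normM M (u l) ^ 2 ≤ (E * normM N (v j0)) ^ 2 :=
      pow_le_pow_left₀ (normM_nonneg _ _) (le_trans h_l_le hMN_j0) 2
    have hBB : normM M (u ⟨0, hd1⟩) ^ 2 ≤ (E * normM N (v j1)) ^ 2 :=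
      pow_le_pow_left₀ (normM_nonneg _ _) (le_trans h_0_le hMN_j1) 2
    calc normM M (u l) ^ 2 + normM M (u ⟨0, hd1⟩) ^ 2
        ≤ (E * normM N (v j0)) ^ 2 + (E * normM N (v j1)) ^ 2 := add_le_add hA hBB
      _ = E ^ 2 * (normM N (v j0) ^ 2 + normM N (v j1) ^ 2) := by ring
      _ ≤ E ^ 2 * (normM N z) ^ 2 := by
          apply mul_le_mul_of_nonneg_left _ (by positivity)
          rw [sq_normM hN, sq_normM hN, sq_normM hN]
          exact hkey
      _ ≤ E ^ 2 * (E * normM M z) ^ 2 :=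
          mul_le_mul_of_nonneg_left (pow_le_pow_left₀ (normM_nonneg _ _) hNM_z 2)
            (by positivity)
      _ = normM M z ^ 2 * E ^ 4 := by ring

end
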